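/- Let T be the simultaneous cyclic shift on ∏_{i=1}^n Z_{2^i}^{α_i} and let k = lcm(α_1, …, α_n). Then for all u, v ∈ ∏_{i=1}^n Z_{2^i}^{α_i}, one has T^{k−1}(v) · u = v · T(u), where · is the inner product u·v = [Σ_{i=1}^n 2^{n−i} Σ_{j=1}^{α_i} u_{ij} v_{ij}] mod 2^n. -/

import Mathlib

/-- The ambient space `∏_{i=1}^n Z_{2^i}^{α_i}` (0-indexed: block `i` has entries in
`Z_{2^{i+1}}`). -/
abbrev Amb (n : ℕ) (α : Fin n → ℕ) := ∀ i : Fin n, Fin (α i) → ZMod (2 ^ (i.1 + 1))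

/-- The simultaneous cyclic shift `T`: each block is shifted cyclically,
`T(v)_{i,j} = v_{i,j-1}` (indices mod `α i`). -/
def shiftT {n : ℕ} {α : Fin n → ℕ} (v : Amb n α) : Amb n α :=
  fun i j => v i ((finRotate (α i)).symm j)

/-- The inner product `u·v = [Σ_i 2^{n−i} Σ_j u_{ij} v_{ij}] mod 2^n`, entries lifted
to the integers (block `i` in our 0-indexing is the paper's block `i+1`, weighted by
`2^{n-(i+1)} = 2^{n-1-i}`). -/
def innerZ {n : ℕ} {α : Fin n → ℕ} (u v : Amb n α) : ZMod (2 ^ n) :=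
  ∑ i : Fin n, (2 : ZMod (2 ^ n)) ^ (n - 1 - i.1) *
    ∑ j : Fin (α i), ((u i j).val : ZMod (2 ^ n)) * ((v i j).val : ZMod (2 ^ n))

open Fin.CommRing
lemma shiftT_iterate {n : ℕ} {α : Fin n → ℕ} (v : Amb n α) (m : ℕ) (i : Fin n)
    (j : Fin (α i)) :
    (shiftT^[m] v) i j = v i (((finRotate (α i)).symm)^[m] j) := by
  induction m generalizing v j with
  | zero => rfl
  | succ m ih =>
      rw [Function.iterate_succ_apply, ih, Function.iterate_succ_apply']
      rfl

lemma rotate_symm_eq (s : ℕ) (j : Fin (s + 1)) :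
    (finRotate (s + 1)).symm j = j - 1 := by
  rw [Equiv.symm_apply_eq, finRotate_succ_apply, sub_add_cancel]

lemma rotate_symm_iter (s k : ℕ) (j : Fin (s + 1)) :
    ((finRotate (s + 1)).symm)^[k] j = j - (k : Fin (s + 1)) := by
  induction k with
  | zero => simp
  | succ k ih =>
      rw [Function.iterate_succ_apply', ih, rotate_symm_eq]
      push_cast
      ring

lemma key_rot (m : ℕ) (hm : 0 < m) (k : ℕ) (hk1 : 1 ≤ k) (hdvd : m ∣ k)
    (j : Fin m) : ((finRotate m).symm)^[k - 1] j = finRotate m j := by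
  obtain ⟨s, rfl⟩ := Nat.exists_eq_succ_of_ne_zero hm.ne'
  have hk0 : ((k : ℕ) : Fin (s + 1)) = 0 := by
    rwa [Fin.natCast_eq_zero]
  rw [rotate_symm_iter, finRotate_succ_apply, Nat.cast_sub hk1, hk0]
  push_cast
  ring

/-- with `k = lcm(α_1, …, α_n)`, `T^{k−1}(v) · u = v · T(u)`. -/
theorem stmt_11 (n : ℕ) (hn : 1 ≤ n) (α : Fin n → ℕ) (hα : ∀ i, 0 < α i)
    (u v : Amb n α) :
    innerZ (shiftT^[Finset.univ.lcm α - 1] v) u = innerZ v (shiftT u) := by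
  classical
  have hdvd : ∀ i : Fin n, α i ∣ Finset.univ.lcm α :=
    fun i => Finset.dvd_lcm (Finset.mem_univ i)
  have hk1 : 1 ≤ Finset.univ.lcm α := by
    rcases Nat.eq_zero_or_pos (Finset.univ.lcm α) with h | h
    · exfalso
      rw [Finset.lcm_eq_zero_iff] at h
      obtain ⟨i, -, hi⟩ := h
      exact (hα i).ne' hi
    · exact h
  unfold innerZ
  refine Finset.sum_congr rfl fun i _ => ?_
  congr 1
  have hrot : ∀ j : Fin (α i),
      (shiftT^[Finset.univ.lcm α - 1] v) i j = v i (finRotate (α i) j) := by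
    intro j
    rw [shiftT_iterate, key_rot (α i) (hα i) _ hk1 (hdvd i)]
  simp only [hrot, shiftT]
  rw [← Equiv.sum_comp (finRotate (α i)) (fun j => ((v i j).val : ZMod (2 ^ n)) *
    ((u i ((finRotate (α i)).symm j)).val : ZMod (2 ^ n)))]
  simp only [Equiv.symm_apply_apply]
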